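/- Let p, q ∈ [0, 1/2]. Then the double inequality G(p·a+(1-p)·b, p·b+(1-p)·a) < I(a,b) < G(q·a+(1-q)·b, q·b+(1-q)·a) holds for every pair of distinct positive real numbers a and b if and only if p ≤ (1 - √(1 - 4/e²))/2 and q ≥ (3 - √3)/6. -/

import Mathlib

noncomputable def A (a b : ℝ) : ℝ := (a + b) / 2

noncomputable def G (a b : ℝ) : ℝ := Real.sqrt (a * b)

noncomputable def H (a b : ℝ) : ℝ := 2 * a * b / (a + b)

noncomputable def I (a b : ℝ) : ℝ :=
  (1 / Real.exp 1) * (a ^ a / b ^ b) ^ (1 / (a - b))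

noncomputable def Q (t s a b : ℝ) : ℝ :=
  G (t * a + (1 - t) * b) (t * b + (1 - t) * a) ^ s * A a b ^ (1 - s)

noncomputable def f (u s x : ℝ) : ℝ :=
  1 - (1 / (2 * x)) * Real.log ((1 + x) / (1 - x))
    - (1 / 2) * Real.log (1 - x ^ 2) + (s / 2) * Real.log (1 - u * x ^ 2)

noncomputable def h (u s x : ℝ) : ℝ :=
  -x + (1 / 2) * Real.log ((1 + x) / (1 - x)) - s * u * x ^ 3 / (1 - u * x ^ 2)

open Real Set Filter Topology

lemma hasDerivAt_L {x : ℝ} (hx1 : -1 < x) (hx2 : x < 1) :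
    HasDerivAt (fun x => Real.log ((1 + x) / (1 - x))) (2 / (1 - x ^ 2)) x := by
  have h1 : (0:ℝ) < 1 + x := by linarith
  have h2 : (0:ℝ) < 1 - x := by linarith
  have h3 : (1:ℝ) - x ^ 2 ≠ 0 := by nlinarith
  have hq : HasDerivAt (fun x : ℝ => (1 + x) / (1 - x))
      ((1 * (1 - x) - (1 + x) * (-1)) / (1 - x) ^ 2) x :=
    (HasDerivAt.const_add 1 (hasDerivAt_id x)).div
      ((hasDerivAt_id x).const_sub 1) (by positivity)
  have := hq.log (by positivity)
  convert this using 1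
  field_simp
  ring

lemma denom_pos {u x : ℝ} (hu0 : 0 ≤ u) (hu1 : u ≤ 1) (hx1 : -1 < x) (hx2 : x < 1) :
    0 < 1 - u * x ^ 2 := by nlinarith [sq_nonneg x]

lemma hasDerivAt_h {u x : ℝ} (hu0 : 0 ≤ u) (hu1 : u ≤ 1) (hx1 : -1 < x) (hx2 : x < 1) :
    HasDerivAt (h u 1)
      (x ^ 2 * (1 - 3 * u + u * (1 + u) * x ^ 2) / ((1 - x ^ 2) * (1 - u * x ^ 2) ^ 2)) x := by
  have h3 : (0:ℝ) < 1 - x ^ 2 := by nlinarith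
  have h4 : (0:ℝ) < 1 - u * x ^ 2 := denom_pos hu0 hu1 hx1 hx2
  have hnum : HasDerivAt (fun x : ℝ => 1 * u * x ^ 3) (1 * u * (3 * x ^ 2)) x := by
    simpa using ((hasDerivAt_pow 3 x).const_mul (1 * u))
  have hden : HasDerivAt (fun x : ℝ => 1 - u * x ^ 2) (-(u * (2 * x))) x := by
    simpa using (((hasDerivAt_pow 2 x).const_mul u).const_sub 1)
  have hfrac := hnum.div hden h4.ne'
  have hL := (hasDerivAt_L hx1 hx2).const_mul (1/2 : ℝ)
  have key := ((hasDerivAt_id x).neg.add hL).sub hfrac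
  unfold h
  refine key.congr_deriv ?_
  rw [show -1 + 1 / 2 * (2 / (1 - x ^ 2)) = x ^ 2 / (1 - x ^ 2) by field_simp; ring]
  rw [div_sub_div _ _ h3.ne' (by positivity), div_eq_div_iff (by positivity) (by positivity)]
  ring

lemma hasDerivAt_f {u x : ℝ} (hu0 : 0 ≤ u) (hu1 : u ≤ 1) (hx0 : 0 < x) (hx2 : x < 1) :
    HasDerivAt (f u 1) (h u 1 x / x ^ 2) x := by
  have hx1 : -1 < x := by linarith
  have h1 : (0:ℝ) < 1 + x := by linarith
  have h2 : (0:ℝ) < 1 - x := by linarith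
  have h3 : (0:ℝ) < 1 - x ^ 2 := by nlinarith
  have h4 : (0:ℝ) < 1 - u * x ^ 2 := denom_pos hu0 hu1 hx1 hx2
  have hmul2 : HasDerivAt (fun x : ℝ => 2 * x) 2 x := by
    simpa using (hasDerivAt_id x).const_mul (2:ℝ)
  have hinv : HasDerivAt (fun x : ℝ => 1 / (2 * x))
      ((0 * (2 * x) - 1 * 2) / (2 * x) ^ 2) x :=
    (hasDerivAt_const x 1).div hmul2 (by positivity)
  have hA := hinv.mul (hasDerivAt_L hx1 hx2)
  have hB : HasDerivAt (fun x : ℝ => (1/2 : ℝ) * Real.log (1 - x ^ 2))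
      ((1/2 : ℝ) * ((-(2 * x)) / (1 - x ^ 2))) x := by
    have : HasDerivAt (fun x : ℝ => 1 - x ^ 2) (-(2 * x)) x := by
      simpa using (hasDerivAt_pow 2 x).const_sub 1
    exact (this.log h3.ne').const_mul _
  have hC : HasDerivAt (fun x : ℝ => (1/2 : ℝ) * Real.log (1 - u * x ^ 2))
      ((1/2 : ℝ) * ((-(u * (2 * x))) / (1 - u * x ^ 2))) x := by
    have : HasDerivAt (fun x : ℝ => 1 - u * x ^ 2) (-(u * (2 * x))) x := by
      simpa using ((hasDerivAt_pow 2 x).const_mul u).const_sub 1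
    exact (this.log h4.ne').const_mul _
  have key := (((hA.const_sub 1).sub hB).add hC)
  have hval : (-((0 * (2 * x) - 1 * 2) / (2 * x) ^ 2 * Real.log ((1 + x) / (1 - x)) + 1 / (2 * x) * (2 / (1 - x ^ 2))) -
        1 / 2 * (-(2 * x) / (1 - x ^ 2)) +
      1 / 2 * (-(u * (2 * x)) / (1 - u * x ^ 2))) = h u 1 x / x ^ 2 := by
    unfold h
    field_simp
    ring
  rw [← hval]
  unfold f
  exact key

lemma tendsto_slope_L : Tendsto (fun x : ℝ => (1 / (2 * x)) * Real.log ((1 + x) / (1 - x)))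
    (𝓝[>] (0:ℝ)) (𝓝 1) := by
  have hd : HasDerivAt (fun x => Real.log ((1 + x) / (1 - x))) 2 0 := by
    simpa using hasDerivAt_L (x := 0) (by norm_num) (by norm_num)
  have hs := hasDerivAt_iff_tendsto_slope.mp hd
  have hs' : Tendsto (slope (fun x => Real.log ((1 + x) / (1 - x))) 0) (𝓝[>] (0:ℝ)) (𝓝 2) :=
    hs.mono_left (nhdsWithin_mono _ fun x hx => ne_of_gt hx)
  have := hs'.const_mul (1/2 : ℝ)
  norm_num at this
  refine this.congr' ?_
  filter_upwards [self_mem_nhdsWithin] with x hx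
  have hx0 : x ≠ 0 := ne_of_gt hx
  simp only [slope_fun_def, vsub_eq_sub, sub_zero]
  norm_num
  ring

lemma tendsto_f_zero (u : ℝ) : Tendsto (f u 1) (𝓝[>] (0:ℝ)) (𝓝 0) := by
  have h2 : Tendsto (fun x : ℝ => Real.log (1 - x ^ 2)) (𝓝[>] (0:ℝ)) (𝓝 0) := by
    have : ContinuousAt (fun x : ℝ => Real.log (1 - x ^ 2)) 0 := by
      apply ContinuousAt.log (by fun_prop) (by norm_num)
    simpa using this.continuousWithinAt.tendsto
  have h3 : Tendsto (fun x : ℝ => Real.log (1 - u * x ^ 2)) (𝓝[>] (0:ℝ)) (𝓝 0) := by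
    have : ContinuousAt (fun x : ℝ => Real.log (1 - u * x ^ 2)) 0 := by
      apply ContinuousAt.log (by fun_prop) (by norm_num)
    simpa using this.continuousWithinAt.tendsto
  have := ((tendsto_const_nhds (x := (1:ℝ)) (f := 𝓝[>] (0:ℝ))).sub tendsto_slope_L).sub
      (h2.const_mul (1/2 : ℝ)) |>.add (h3.const_mul (1/2 : ℝ))
  norm_num at this
  refine this.congr (fun x => ?_)
  unfold f
  ring

lemma tendsto_f_one {u : ℝ} (hu : u < 1) :
    Tendsto (f u 1) (𝓝[<] (1:ℝ)) (𝓝 (1 - Real.log 2 + (1/2) * Real.log (1 - u))) := by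
  have hmem : Set.Ioo (0:ℝ) 1 ∈ 𝓝[<] (1:ℝ) :=
    Ioo_mem_nhdsLT_of_mem (by norm_num : (1:ℝ) ∈ Set.Ioc (0:ℝ) 1)
  -- term A : (1/(2x)+1/2) * log (1+x) → log 2
  have hA : Tendsto (fun x : ℝ => (1/(2*x) + 1/2) * Real.log (1 + x)) (𝓝[<] (1:ℝ))
      (𝓝 (Real.log 2)) := by
    have : ContinuousAt (fun x : ℝ => (1/(2*x) + 1/2) * Real.log (1 + x)) 1 := by
      apply ContinuousAt.mul
      · fun_prop (disch := norm_num)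
      · exact (Real.continuousAt_log (by norm_num)).comp (by fun_prop)
    have h1 := this.tendsto.mono_left (nhdsWithin_le_nhds (s := Set.Iio (1:ℝ)))
    have hv : (1/(2*(1:ℝ)) + 1/2) * Real.log (1+1) = Real.log 2 := by norm_num
    rw [← hv]; exact h1
  -- term B : (1/(2x)) * ((1-x) * log (1-x)) → 0
  have hB : Tendsto (fun x : ℝ => (1/(2*x)) * (Real.log (1-x) * (1-x))) (𝓝[<] (1:ℝ))
      (𝓝 0) := by
    have hmap : Tendsto (fun x : ℝ => 1 - x) (𝓝[<] (1:ℝ)) (𝓝[>] (0:ℝ)) := by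
      apply tendsto_nhdsWithin_of_tendsto_nhds_of_eventually_within
      · have : ContinuousAt (fun x : ℝ => 1 - x) 1 := by fun_prop
        simpa using this.tendsto.mono_left (nhdsWithin_le_nhds (s := Set.Iio (1:ℝ)))
      · filter_upwards [self_mem_nhdsWithin] with x hx
        simp only [Set.mem_Iio] at hx
        simp [Set.mem_Ioi]; linarith
    have hlog : Tendsto (fun x : ℝ => Real.log (1-x) * (1-x)) (𝓝[<] (1:ℝ)) (𝓝 0) := by
      have := (tendsto_log_mul_rpow_nhdsGT_zero (r := 1) one_pos).comp hmap
      simpa [Function.comp_def] using this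
    have hc : Tendsto (fun x : ℝ => 1/(2*x)) (𝓝[<] (1:ℝ)) (𝓝 (1/2)) := by
      have : ContinuousAt (fun x : ℝ => 1/(2*x)) 1 := by fun_prop (disch := norm_num)
      have h1 := this.tendsto.mono_left (nhdsWithin_le_nhds (s := Set.Iio (1:ℝ)))
      have hv : 1/(2*(1:ℝ)) = 1/2 := by norm_num
      rw [← hv]; exact h1
    simpa using hc.mul hlog
  -- term C : (1/2) * log (1 - u x^2) → (1/2) log (1-u)
  have hC : Tendsto (fun x : ℝ => (1/2 : ℝ) * Real.log (1 - u * x ^ 2)) (𝓝[<] (1:ℝ))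
      (𝓝 ((1/2) * Real.log (1 - u))) := by
    have : ContinuousAt (fun x : ℝ => (1/2 : ℝ) * Real.log (1 - u * x ^ 2)) 1 := by
      apply ContinuousAt.mul (by fun_prop)
      exact (Real.continuousAt_log (by norm_num; linarith)).comp (by fun_prop)
    have h1 := this.tendsto.mono_left (nhdsWithin_le_nhds (s := Set.Iio (1:ℝ)))
    have hv : (1 - u * (1:ℝ) ^ 2) = 1 - u := by norm_num
    rw [← hv]; exact h1
  have hsum := ((tendsto_const_nhds (x := (1:ℝ)) (f := 𝓝[<] (1:ℝ))).sub hA).add (hB.add hC)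
  have : (1:ℝ) - Real.log 2 + (1/2) * Real.log (1 - u)
      = 1 - Real.log 2 + (0 + (1/2) * Real.log (1-u)) := by ring
  rw [this]
  refine hsum.congr' ?_
  filter_upwards [hmem] with x hx
  obtain ⟨hx0, hx1⟩ := hx
  have h1 : (0:ℝ) < 1 + x := by linarith
  have h2 : (0:ℝ) < 1 - x := by linarith
  unfold f
  rw [Real.log_div h1.ne' h2.ne']
  have : (1:ℝ) - x ^ 2 = (1 + x) * (1 - x) := by ring
  rw [this, Real.log_mul h1.ne' h2.ne']
  have hx0' : x ≠ 0 := ne_of_gt hx0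
  field_simp
  ring

lemma h_zero (u : ℝ) : h u 1 0 = 0 := by simp [h]

lemma h_pos {u : ℝ} (hu0 : 0 ≤ u) (hu3 : u ≤ 1/3) {x : ℝ} (hx : x ∈ Ioo 0 1) :
    0 < h u 1 x := by
  have hu1 : u ≤ 1 := by linarith
  have hmono : StrictMonoOn (h u 1) (Ico 0 1) := by
    apply strictMonoOn_of_deriv_pos (convex_Ico 0 1)
    · intro y hy
      exact (hasDerivAt_h hu0 hu1 (by linarith [hy.1]) hy.2).continuousAt.continuousWithinAt
    · intro y hy
      rw [interior_Ico] at hy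
      rw [(hasDerivAt_h hu0 hu1 (by linarith [hy.1]) hy.2).deriv]
      have hy0 : 0 < y := hy.1
      have hy1 : y < 1 := hy.2
      have hden : 0 < (1 - y ^ 2) * (1 - u * y ^ 2) ^ 2 := by
        have h5 := denom_pos hu0 hu1 (by linarith) hy1
        have h6 : (0:ℝ) < 1 - y ^ 2 := by nlinarith
        exact mul_pos h6 (pow_pos h5 2)
      have hnum : 0 < y ^ 2 * (1 - 3 * u + u * (1 + u) * y ^ 2) := by
        have hy2 : 0 < y ^ 2 := pow_pos hy0 2
        rcases eq_or_lt_of_le hu0 with hu | hu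
        · rw [← hu]; norm_num; exact hy2
        · have h7 : 0 < u * (1 + u) * y ^ 2 := by positivity
          have h8 : 0 < 1 - 3 * u + u * (1 + u) * y ^ 2 := by linarith
          exact mul_pos hy2 h8
      exact div_pos hnum hden
  have := hmono (Set.left_mem_Ico.mpr one_pos) ⟨le_of_lt hx.1, hx.2⟩ hx.1
  rwa [h_zero] at this

lemma f_pos {u : ℝ} (hu0 : 0 ≤ u) (hu3 : u ≤ 1/3) {x : ℝ} (hx : x ∈ Ioo 0 1) :
    0 < f u 1 x := by
  have hu1 : u ≤ 1 := by linarith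
  have hmono : StrictMonoOn (f u 1) (Ioo 0 1) := by
    apply strictMonoOn_of_deriv_pos (convex_Ioo 0 1)
    · intro y hy
      exact (hasDerivAt_f hu0 hu1 hy.1 hy.2).continuousAt.continuousWithinAt
    · intro y hy
      rw [interior_Ioo] at hy
      rw [(hasDerivAt_f hu0 hu1 hy.1 hy.2).deriv]
      exact div_pos (h_pos hu0 hu3 hy) (pow_pos hy.1 2)
  have hhalf : x / 2 ∈ Set.Ioo (0:ℝ) 1 := ⟨by linarith [hx.1], by linarith [hx.2]⟩
  have h1 : 0 ≤ f u 1 (x / 2) := by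
    refine le_of_tendsto (tendsto_f_zero u) ?_
    have : Set.Ioo (0:ℝ) (x/2) ∈ 𝓝[>] (0:ℝ) :=
      Ioo_mem_nhdsGT_of_mem (by constructor <;> [rfl; linarith [hx.1]])
    filter_upwards [this] with y hy
    exact le_of_lt (hmono ⟨hy.1, by linarith [hhalf.2, hy.2]⟩ hhalf hy.2)
  have h2 := hmono hhalf hx (by linarith [hx.1])
  linarith

-- derivative sign of h in the case u > 1/3
lemma deriv_h_neg {u y : ℝ} (hu0 : 0 ≤ u) (hu1 : u ≤ 1) (hy0 : 0 < y) (hy1 : y < 1)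
    (hg : 1 - 3 * u + u * (1 + u) * y ^ 2 < 0) : deriv (h u 1) y < 0 := by
  rw [(hasDerivAt_h hu0 hu1 (by linarith) hy1).deriv]
  have h5 := denom_pos hu0 hu1 (by linarith) hy1
  have h6 : (0:ℝ) < 1 - y ^ 2 := by nlinarith
  have hden : 0 < (1 - y ^ 2) * (1 - u * y ^ 2) ^ 2 := mul_pos h6 (pow_pos h5 2)
  apply div_neg_of_neg_of_pos _ hden
  have hy2 : 0 < y ^ 2 := pow_pos hy0 2
  nlinarith

lemma deriv_h_pos {u y : ℝ} (hu0 : 0 ≤ u) (hu1 : u ≤ 1) (hy0 : 0 < y) (hy1 : y < 1)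
    (hg : 0 < 1 - 3 * u + u * (1 + u) * y ^ 2) : 0 < deriv (h u 1) y := by
  rw [(hasDerivAt_h hu0 hu1 (by linarith) hy1).deriv]
  have h5 := denom_pos hu0 hu1 (by linarith) hy1
  have h6 : (0:ℝ) < 1 - y ^ 2 := by nlinarith
  have hden : 0 < (1 - y ^ 2) * (1 - u * y ^ 2) ^ 2 := mul_pos h6 (pow_pos h5 2)
  exact div_pos (mul_pos (pow_pos hy0 2) hg) hden

lemma f_neg_aux {u : ℝ} (hu3 : 1/3 < u) (hu1 : u < 1)
    (htop : 1 - Real.log 2 + (1/2) * Real.log (1 - u) ≤ 0) {x : ℝ} (hx : x ∈ Ioo 0 1) :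
    f u 1 x < 0 := by
  have hu0 : (0:ℝ) ≤ u := by linarith
  have hu1' : u ≤ 1 := le_of_lt hu1
  set c : ℝ := Real.sqrt ((3 * u - 1) / (u * (1 + u))) with hc
  have hupos : (0:ℝ) < u := by linarith
  have hratio_pos : 0 < (3 * u - 1) / (u * (1 + u)) := by
    apply div_pos (by linarith)
    positivity
  have hc0 : 0 < c := Real.sqrt_pos.mpr hratio_pos
  have hcsq : c ^ 2 = (3 * u - 1) / (u * (1 + u)) := Real.sq_sqrt hratio_pos.le
  have hc1 : c < 1 := by
    rw [show (1:ℝ) = Real.sqrt 1 by simp]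
    apply Real.sqrt_lt_sqrt hratio_pos.le
    rw [div_lt_one (by positivity)]
    nlinarith
  -- g sign facts
  have hgneg : ∀ y : ℝ, 0 < y → y < c → 1 - 3 * u + u * (1 + u) * y ^ 2 < 0 := by
    intro y hy0 hyc
    have : y ^ 2 < c ^ 2 := by nlinarith
    rw [hcsq] at this
    have h9 : u * (1 + u) * y ^ 2 < 3 * u - 1 := by
      rw [lt_div_iff₀ (by positivity)] at this
      nlinarith
    linarith
  have hgpos : ∀ y : ℝ, c < y → 0 < 1 - 3 * u + u * (1 + u) * y ^ 2 := by
    intro y hyc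
    have : c ^ 2 < y ^ 2 := by nlinarith
    rw [hcsq] at this
    rw [div_lt_iff₀ (by positivity)] at this
    nlinarith
  -- h is negative on (0, c]
  have hanti : StrictAntiOn (h u 1) (Icc 0 c) := by
    apply strictAntiOn_of_deriv_neg (convex_Icc 0 c)
    · intro y hy
      exact (hasDerivAt_h hu0 hu1' (by linarith [hy.1]) (by linarith [hy.2])).continuousAt.continuousWithinAt
    · intro y hy
      rw [interior_Icc] at hy
      exact deriv_h_neg hu0 hu1' hy.1 (by linarith [hy.2]) (hgneg y hy.1 hy.2)
  have hhneg : ∀ y : ℝ, 0 < y → y ≤ c → h u 1 y < 0 := by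
    intro y hy0 hyc
    have := hanti (Set.left_mem_Icc.mpr hc0.le) ⟨hy0.le, hyc⟩ hy0
    rwa [h_zero] at this
  -- h is strictly increasing on [c, 1)
  have hmono : StrictMonoOn (h u 1) (Ico c 1) := by
    apply strictMonoOn_of_deriv_pos (convex_Ico c 1)
    · intro y hy
      exact (hasDerivAt_h hu0 hu1' (by linarith [hc0, hy.1]) hy.2).continuousAt.continuousWithinAt
    · intro y hy
      rw [interior_Ico] at hy
      exact deriv_h_pos hu0 hu1' (by linarith [hy.1]) hy.2 (hgpos y hy.1)
  -- f is strictly decreasing on (0, c]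
  have hfanti : StrictAntiOn (f u 1) (Ioc 0 c) := by
    apply strictAntiOn_of_deriv_neg (convex_Ioc 0 c)
    · intro y hy
      exact (hasDerivAt_f hu0 hu1' hy.1 (by linarith [hy.2])).continuousAt.continuousWithinAt
    · intro y hy
      rw [interior_Ioc] at hy
      rw [(hasDerivAt_f hu0 hu1' hy.1 (by linarith [hy.2])).deriv]
      exact div_neg_of_neg_of_pos (hhneg y hy.1 hy.2.le) (pow_pos hy.1 2)
  have hfneg_le : ∀ y : ℝ, y ∈ Ioc 0 c → f u 1 y < 0 := by
    intro y hy
    have hy2 : y / 2 ∈ Ioc 0 c := ⟨by linarith [hy.1], by linarith [hy.2]⟩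
    have h1 : f u 1 (y / 2) ≤ 0 := by
      refine ge_of_tendsto (tendsto_f_zero u) ?_
      have : Set.Ioo (0:ℝ) (y/2) ∈ 𝓝[>] (0:ℝ) :=
        Ioo_mem_nhdsGT_of_mem (by constructor <;> [rfl; linarith [hy.1]])
      filter_upwards [this] with z hz
      exact le_of_lt (hfanti ⟨hz.1, by linarith [hz.2, hy2.2]⟩ hy2 hz.2)
    have := hfanti hy2 hy (by linarith [hy.1])
    linarith
  -- key: on [c,1), if h is positive at y then f y < 0 using the limit at 1
  have hflim : ∀ y : ℝ, y ∈ Ico c 1 → 0 < h u 1 y → f u 1 y < 0 := by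
    intro y hy hhy
    have hy0 : 0 < y := lt_of_lt_of_le hc0 hy.1
    -- h > 0 on [y, 1)
    have hpos : ∀ z : ℝ, z ∈ Ico y 1 → 0 < h u 1 z := by
      intro z hz
      rcases eq_or_lt_of_le hz.1 with hzy | hzy
      · rwa [← hzy]
      · exact lt_trans hhy (hmono ⟨hy.1, hy.2⟩ ⟨le_trans hy.1 hz.1, hz.2⟩ hzy)
    have hfm : StrictMonoOn (f u 1) (Ico y 1) := by
      apply strictMonoOn_of_deriv_pos (convex_Ico y 1)
      · intro z hz
        exact (hasDerivAt_f hu0 hu1' (lt_of_lt_of_le hy0 hz.1) hz.2).continuousAt.continuousWithinAt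
      · intro z hz
        rw [interior_Ico] at hz
        have hz0 : 0 < z := lt_trans hy0 hz.1
        rw [(hasDerivAt_f hu0 hu1' hz0 hz.2).deriv]
        exact div_pos (hpos z ⟨hz.1.le, hz.2⟩) (pow_pos hz0 2)
    -- each point of [y,1) is ≤ the limit at 1
    have hle : ∀ z : ℝ, z ∈ Ico y 1 → f u 1 z ≤ 1 - Real.log 2 + (1/2) * Real.log (1 - u) := by
      intro z hz
      refine ge_of_tendsto (tendsto_f_one hu1) ?_
      have : Set.Ioo z 1 ∈ 𝓝[<] (1:ℝ) := Ioo_mem_nhdsLT_of_mem ⟨hz.2, le_refl 1⟩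
      filter_upwards [this] with w hw
      exact le_of_lt (hfm hz ⟨le_trans hz.1 hw.1.le, hw.2⟩ hw.1)
    have hwmem : (y + 1) / 2 ∈ Ico y 1 := ⟨by linarith [hy.2], by linarith [hy.2]⟩
    have h1 := hfm ⟨le_refl y, hy.2⟩ hwmem (by linarith [hy.2])
    have h2 := hle ((y+1)/2) hwmem
    linarith
  -- put the cases together
  rcases le_or_gt x c with hxc | hxc
  · exact hfneg_le x ⟨hx.1, hxc⟩
  · rcases le_or_gt (h u 1 x) 0 with hhx | hhx
    · -- h ≤ 0 on (0, x]; f is antitone there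
      have hmono2 : AntitoneOn (f u 1) (Ioc 0 x) := by
        apply antitoneOn_of_deriv_nonpos (convex_Ioc 0 x)
        · intro y hy
          exact (hasDerivAt_f hu0 hu1' hy.1 (lt_of_le_of_lt hy.2 hx.2)).continuousAt.continuousWithinAt
        · intro y hy
          rw [interior_Ioc] at hy
          exact ((hasDerivAt_f hu0 hu1' hy.1 (lt_trans hy.2 hx.2)).differentiableAt).differentiableWithinAt
        · intro y hy
          rw [interior_Ioc] at hy
          rw [(hasDerivAt_f hu0 hu1' hy.1 (lt_trans hy.2 hx.2)).deriv]
          apply div_nonpos_of_nonpos_of_nonneg _ (sq_nonneg y)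
          rcases le_or_gt y c with hyc | hyc
          · exact (hhneg y hy.1 hyc).le
          · have := hmono ⟨hyc.le, lt_trans hy.2 hx.2⟩ ⟨hxc.le, hx.2⟩ hy.2
            linarith
      have h1 := hmono2 ⟨hc0, hxc.le⟩ ⟨hx.1, le_refl x⟩ hxc.le
      have h2 := hfneg_le c ⟨hc0, le_refl c⟩
      linarith
    · exact hflim x ⟨hxc.le, hx.2⟩ hhx

lemma f_even (u s x : ℝ) : f u s (-x) = f u s x := by
  unfold f
  have h1 : (1 + -x) / (1 - -x) = ((1 + x) / (1 - x))⁻¹ := by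
    rw [inv_div]; ring_nf
  rw [h1, Real.log_inv]
  ring_nf

lemma bridge {t a b : ℝ} (ht0 : 0 ≤ t) (ht1 : t ≤ 1/2) (ha : 0 < a) (hb : 0 < b)
    (hab : a ≠ b) :
    0 < |(a-b)/(a+b)| ∧ |(a-b)/(a+b)| < 1 ∧
    (G (t*a + (1-t)*b) (t*b + (1-t)*a) < I a b ↔
      f ((1-2*t)^2) 1 (|(a-b)/(a+b)|) < 0) ∧
    (I a b < G (t*a + (1-t)*b) (t*b + (1-t)*a) ↔
      0 < f ((1-2*t)^2) 1 (|(a-b)/(a+b)|)) := by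
  have hS : 0 < a + b := by linarith
  set x := (a-b)/(a+b) with hxdef
  have hxne : x ≠ 0 := div_ne_zero (sub_ne_zero.mpr hab) hS.ne'
  have hx2 : x < 1 := by
    rw [hxdef, div_lt_one hS]; linarith
  have hx1 : -1 < x := by
    rw [hxdef, lt_div_iff₀ hS]; linarith
  set A : ℝ := (a+b)/2 with hAdef
  have hA : 0 < A := by positivity
  have hax : a = A * (1+x) := by
    rw [hAdef, hxdef]; field_simp; ring
  have hbx : b = A * (1-x) := by
    rw [hAdef, hxdef]; field_simp; ring
  set u : ℝ := (1-2*t)^2 with hudef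
  have hu0 : 0 ≤ u := sq_nonneg _
  have hu1 : u ≤ 1 := by rw [hudef]; nlinarith
  have h1x : (0:ℝ) < 1 + x := by linarith
  have h2x : (0:ℝ) < 1 - x := by linarith
  have hux : 0 < 1 - u * x ^ 2 := by nlinarith [sq_nonneg x, sq_nonneg (x*(1-2*t))]
  have hxx : 0 < 1 - x ^ 2 := by nlinarith
  -- the two factors
  have hF1 : t*a + (1-t)*b = A * (1 + (2*t-1)*x) := by rw [hax, hbx]; ring
  have hF2 : t*b + (1-t)*a = A * (1 - (2*t-1)*x) := by rw [hax, hbx]; ring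
  have hpos1 : 0 < 1 + (2*t-1)*x := by
    rcases eq_or_lt_of_le ht1 with h | h
    · rw [h]; norm_num
    · nlinarith [mul_pos (by linarith : (0:ℝ) < 1 - 2*t) h2x]
  have hpos2 : 0 < 1 - (2*t-1)*x := by
    rcases eq_or_lt_of_le ht1 with h | h
    · rw [h]; norm_num
    · nlinarith [mul_pos (by linarith : (0:ℝ) < 1 - 2*t) h1x]
  have hprod : (t*a + (1-t)*b) * (t*b + (1-t)*a) = A^2 * (1 - u * x^2) := by
    rw [hF1, hF2, hudef]; ring
  have hGpos : 0 < G (t*a + (1-t)*b) (t*b + (1-t)*a) := by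
    unfold G
    apply Real.sqrt_pos.mpr
    rw [hprod]
    positivity
  have hlogG : Real.log (G (t*a + (1-t)*b) (t*b + (1-t)*a))
      = Real.log A + (1/2) * Real.log (1 - u * x^2) := by
    unfold G
    rw [Real.log_sqrt (by rw [hprod]; positivity), hprod,
      Real.log_mul (by positivity) hux.ne', Real.log_pow]
    push_cast
    ring
  have hIpos : 0 < I a b := by
    unfold I
    have h1 : 0 < a ^ a / b ^ b := div_pos (Real.rpow_pos_of_pos ha a) (Real.rpow_pos_of_pos hb b)
    have := Real.rpow_pos_of_pos h1 (1/(a-b))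
    positivity
  have hlogI : Real.log (I a b)
      = Real.log A - 1 + (1/(2*x)) * Real.log ((1+x)/(1-x)) + (1/2) * Real.log (1-x^2) := by
    unfold I
    have h1 : 0 < a ^ a / b ^ b := div_pos (Real.rpow_pos_of_pos ha a) (Real.rpow_pos_of_pos hb b)
    rw [Real.log_mul (by positivity) (Real.rpow_pos_of_pos h1 _).ne', Real.log_rpow h1,
      Real.log_div (Real.rpow_pos_of_pos ha a).ne' (Real.rpow_pos_of_pos hb b).ne',
      Real.log_rpow ha, Real.log_rpow hb]
    have hla : Real.log a = Real.log A + Real.log (1+x) := by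
      rw [hax, Real.log_mul hA.ne' h1x.ne']
    have hlb : Real.log b = Real.log A + Real.log (1-x) := by
      rw [hbx, Real.log_mul hA.ne' h2x.ne']
    have hlq : Real.log ((1+x)/(1-x)) = Real.log (1+x) - Real.log (1-x) :=
      Real.log_div h1x.ne' h2x.ne'
    have hlp : Real.log (1-x^2) = Real.log (1+x) + Real.log (1-x) := by
      rw [show (1:ℝ) - x^2 = (1+x)*(1-x) by ring, Real.log_mul h1x.ne' h2x.ne']
    have hab' : a - b = 2 * A * x := by rw [hax, hbx]; ring
    have hloge : Real.log (1 / Real.exp 1) = -1 := by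
      rw [one_div, Real.log_inv, Real.log_exp]
    rw [hloge, hla, hlb, hlq, hlp, hab', hax, hbx]
    field_simp
    ring
  have hfabs : f u 1 (|x|) = f u 1 x := by
    rcases abs_cases x with h | h
    · rw [h.1]
    · rw [h.1, f_even]
  have habs0 : 0 < |x| := abs_pos.mpr hxne
  have habs1 : |x| < 1 := abs_lt.mpr ⟨hx1, hx2⟩
  refine ⟨habs0, habs1, ?_, ?_⟩
  · rw [← Real.log_lt_log_iff hGpos hIpos, hlogG, hlogI, hfabs]
    unfold f
    constructor <;> intro hlt <;> linarith
  · rw [← Real.log_lt_log_iff hIpos hGpos, hlogG, hlogI, hfabs]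
    unfold f
    constructor <;> intro hlt <;> linarith

lemma exp_sq_facts : 6 < Real.exp 1 ^ 2 := by
  nlinarith [Real.exp_one_gt_d9]

lemma ustar_gt : 1/3 < 1 - 4 / Real.exp 1 ^ 2 := by
  have h6 := exp_sq_facts
  have hE : (0:ℝ) < Real.exp 1 ^ 2 := by positivity
  have : 4 / Real.exp 1 ^ 2 < 2/3 := by rw [div_lt_iff₀ hE]; nlinarith
  linarith

lemma ustar_lt : 1 - 4 / Real.exp 1 ^ 2 < 1 := by
  have : 0 < 4 / Real.exp 1 ^ 2 := by positivity
  linarith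

lemma log_ustar : Real.log (1 - (1 - 4 / Real.exp 1 ^ 2)) = 2 * Real.log 2 - 2 := by
  have : (1 : ℝ) - (1 - 4 / Real.exp 1 ^ 2) = 4 / Real.exp 1 ^ 2 := by ring
  rw [this, Real.log_div (by norm_num) (by positivity),
    show (4:ℝ) = 2^2 by norm_num, Real.log_pow, Real.log_pow, Real.log_exp]
  push_cast
  ring

lemma f_mono_u {u u' x : ℝ} (hle : u' ≤ u) (hu1 : u ≤ 1) (hx : x ∈ Ioo (0:ℝ) 1) :
    f u 1 x ≤ f u' 1 x := by
  have h1 : 0 < 1 - u * x ^ 2 := by nlinarith [hx.1, hx.2, sq_nonneg x]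
  have h2 : 1 - u * x ^ 2 ≤ 1 - u' * x ^ 2 := by nlinarith [sq_nonneg x]
  have := Real.log_le_log h1 h2
  unfold f
  linarith

lemma f_neg {u : ℝ} (h1 : 1 - 4 / Real.exp 1 ^ 2 ≤ u) (h2 : u ≤ 1) {x : ℝ}
    (hx : x ∈ Ioo (0:ℝ) 1) : f u 1 x < 0 := by
  have hstar : f (1 - 4 / Real.exp 1 ^ 2) 1 x < 0 := by
    apply f_neg_aux ustar_gt ustar_lt _ hx
    rw [log_ustar]
    ring_nf
    linarith
  exact lt_of_le_of_lt (f_mono_u h1 h2 hx) hstar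

lemma forward_p {u : ℝ} (hu1 : u < 1) (hall : ∀ x ∈ Ioo (0:ℝ) 1, f u 1 x < 0) :
    1 - Real.log 2 + (1/2) * Real.log (1 - u) ≤ 0 := by
  refine le_of_tendsto (tendsto_f_one hu1) ?_
  have : Set.Ioo (0:ℝ) 1 ∈ 𝓝[<] (1:ℝ) :=
    Ioo_mem_nhdsLT_of_mem (by constructor <;> norm_num)
  filter_upwards [this] with x hx
  exact (hall x hx).le

lemma forward_q {u : ℝ} (hu0 : 0 ≤ u) (hu1 : u ≤ 1)
    (hall : ∀ x ∈ Ioo (0:ℝ) 1, 0 < f u 1 x) : u ≤ 1/3 := by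
  by_contra hcon
  push_neg at hcon
  have hupos : (0:ℝ) < u := by linarith
  have hratio_pos : 0 < (3 * u - 1) / (u * (1 + u)) := by
    apply div_pos (by linarith); positivity
  set c : ℝ := Real.sqrt ((3 * u - 1) / (u * (1 + u))) with hc
  have hc0 : 0 < c := Real.sqrt_pos.mpr hratio_pos
  have hcsq : c ^ 2 = (3 * u - 1) / (u * (1 + u)) := Real.sq_sqrt hratio_pos.le
  have hc1 : c ≤ 1 := by
    rw [show (1:ℝ) = Real.sqrt 1 by simp]
    apply Real.sqrt_le_sqrt
    rw [div_le_one (by positivity)]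
    nlinarith
  set d : ℝ := c / 2 with hd
  have hd0 : 0 < d := by positivity
  have hd1 : d < 1 := by rw [hd]; linarith
  have hgneg : ∀ y : ℝ, 0 < y → y ≤ d → 1 - 3 * u + u * (1 + u) * y ^ 2 < 0 := by
    intro y hy0 hyc
    have hyc' : y < c := by linarith
    have : y ^ 2 < c ^ 2 := by nlinarith
    rw [hcsq] at this
    rw [lt_div_iff₀ (by positivity)] at this
    nlinarith
  have hanti : StrictAntiOn (h u 1) (Icc 0 d) := by
    apply strictAntiOn_of_deriv_neg (convex_Icc 0 d)
    · intro y hy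
      exact (hasDerivAt_h hu0 hu1 (by linarith [hy.1]) (by linarith [hy.2])).continuousAt.continuousWithinAt
    · intro y hy
      rw [interior_Icc] at hy
      exact deriv_h_neg hu0 hu1 hy.1 (by linarith [hy.2]) (hgneg y hy.1 hy.2.le)
  have hhneg : ∀ y : ℝ, 0 < y → y ≤ d → h u 1 y < 0 := by
    intro y hy0 hyc
    have := hanti (Set.left_mem_Icc.mpr hd0.le) ⟨hy0.le, hyc⟩ hy0
    rwa [h_zero] at this
  have hfanti : StrictAntiOn (f u 1) (Ioc 0 d) := by
    apply strictAntiOn_of_deriv_neg (convex_Ioc 0 d)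
    · intro y hy
      exact (hasDerivAt_f hu0 hu1 hy.1 (by linarith [hy.2])).continuousAt.continuousWithinAt
    · intro y hy
      rw [interior_Ioc] at hy
      rw [(hasDerivAt_f hu0 hu1 hy.1 (by linarith [hy.2])).deriv]
      exact div_neg_of_neg_of_pos (hhneg y hy.1 hy.2.le) (pow_pos hy.1 2)
  have hmemd : d ∈ Ioc (0:ℝ) d := ⟨hd0, le_refl d⟩
  have hmemd2 : d/2 ∈ Ioc (0:ℝ) d := ⟨by linarith, by linarith⟩
  have h1 : f u 1 (d / 2) ≤ 0 := by
    refine ge_of_tendsto (tendsto_f_zero u) ?_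
    have : Set.Ioo (0:ℝ) (d/2) ∈ 𝓝[>] (0:ℝ) :=
      Ioo_mem_nhdsGT_of_mem (by constructor <;> [rfl; linarith])
    filter_upwards [this] with z hz
    exact le_of_lt (hfanti ⟨hz.1, by linarith [hz.2]⟩ hmemd2 hz.2)
  have h2 := hfanti hmemd2 hmemd (by linarith)
  have h3 := hall d ⟨hd0, hd1⟩
  linarith

theorem stmt_10 (p q : ℝ) (hp : p ∈ Set.Icc (0:ℝ) (1/2)) (hq : q ∈ Set.Icc (0:ℝ) (1/2)) :
    (∀ a b : ℝ, 0 < a → 0 < b → a ≠ b →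
        G (p*a + (1-p)*b) (p*b + (1-p)*a) < I a b ∧
          I a b < G (q*a + (1-q)*b) (q*b + (1-q)*a)) ↔
      p ≤ (1 - Real.sqrt (1 - 4 / Real.exp 1 ^ 2)) / 2 ∧ (3 - Real.sqrt 3) / 6 ≤ q := by
  obtain ⟨hp0, hp2⟩ := hp
  obtain ⟨hq0, hq2⟩ := hq
  have hE : (0:ℝ) < Real.exp 1 ^ 2 := by positivity
  have h6 := exp_sq_facts
  have h4 : (0:ℝ) < 4 / Real.exp 1 ^ 2 := by positivity
  have hust0 : (0:ℝ) ≤ 1 - 4 / Real.exp 1 ^ 2 := by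
    have : 4 / Real.exp 1 ^ 2 < 2/3 := by rw [div_lt_iff₀ hE]; nlinarith
    linarith
  set r := Real.sqrt (1 - 4 / Real.exp 1 ^ 2) with hrdef
  have hr2 : r ^ 2 = 1 - 4 / Real.exp 1 ^ 2 := Real.sq_sqrt hust0
  have hr0 : 0 ≤ r := Real.sqrt_nonneg _
  have hr1 : r < 1 := by
    calc r < Real.sqrt 1 := Real.sqrt_lt_sqrt hust0 (by linarith)
    _ = 1 := Real.sqrt_one
  have hs3 : Real.sqrt 3 ^ 2 = 3 := Real.sq_sqrt (by norm_num)
  have hs3' : 0 < Real.sqrt 3 := Real.sqrt_pos.mpr (by norm_num)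
  constructor
  · intro hall
    have key : ∀ x ∈ Ioo (0:ℝ) 1,
        f ((1-2*p)^2) 1 x < 0 ∧ 0 < f ((1-2*q)^2) 1 x := by
      intro x hx
      have hx0 := hx.1
      have hx1 := hx.2
      have ha : (0:ℝ) < 1 + x := by linarith
      have hb : (0:ℝ) < 1 - x := by linarith
      have hne : (1:ℝ) + x ≠ 1 - x := by intro hcon; linarith [hx0]
      have habs : |((1+x) - (1-x))/((1+x)+(1-x))| = x := by
        have hh : ((1+x) - (1-x))/((1+x)+(1-x)) = x := by
          rw [show ((1+x) - (1-x)) = 2*x by ring, show ((1+x)+(1-x)) = 2 by ring]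
          ring
        rw [hh, abs_of_pos hx0]
      obtain ⟨_, _, hiffp, _⟩ := bridge hp0 hp2 ha hb hne
      obtain ⟨_, _, _, hiffq⟩ := bridge hq0 hq2 ha hb hne
      rw [habs] at hiffp hiffq
      obtain ⟨hl, hr⟩ := hall (1+x) (1-x) ha hb hne
      exact ⟨hiffp.mp hl, hiffq.mp hr⟩
    constructor
    · rcases le_or_gt p ((1 - r)/2) with hle | hlt
      · exact hle
      · exfalso
        have h1 : 0 ≤ 1 - 2*p := by linarith
        have h2 : 1 - 2*p < r := by linarith
        have hup : (1-2*p)^2 < 1 - 4 / Real.exp 1 ^ 2 := by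
          rw [← hr2]; nlinarith
        have hup1 : (1-2*p)^2 < 1 := by linarith
        have hfp := forward_p hup1 (fun x hx => (key x hx).1)
        have hlog : Real.log (1 - (1 - 4 / Real.exp 1 ^ 2)) < Real.log (1 - (1-2*p)^2) :=
          Real.log_lt_log (by linarith) (by linarith)
        rw [log_ustar] at hlog
        linarith
    · have huq := forward_q (sq_nonneg _) (by nlinarith) (fun x hx => (key x hx).2)
      nlinarith [sq_nonneg (3*(1-2*q) - Real.sqrt 3), mul_pos hs3' hs3']
  · rintro ⟨hP, hQ⟩ a b ha hb hab
    obtain ⟨habs0, habs1, hiffp, _⟩ := bridge hp0 hp2 ha hb hab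
    obtain ⟨_, _, _, hiffq⟩ := bridge hq0 hq2 ha hb hab
    constructor
    · apply hiffp.mpr
      apply f_neg _ (by nlinarith) ⟨habs0, habs1⟩
      have hrp : r ≤ 1 - 2*p := by linarith
      rw [← hr2]
      nlinarith
    · apply hiffq.mpr
      apply f_pos (sq_nonneg _) _ ⟨habs0, habs1⟩
      have h1 : 1 - 2*q ≤ Real.sqrt 3 / 3 := by linarith
      have h0 : 0 ≤ 1 - 2*q := by linarith
      nlinarith [mul_le_mul h1 h1 h0 (by positivity : (0:ℝ) ≤ Real.sqrt 3 / 3)]
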